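/- The Banzhaf GCM does not satisfy Efficiency: there exist a makespan function v satisfying (S1)–(S4) and a finite set T of transactions such that the sum over tx in T of gas^B_T(tx) is not equal to v(T). In particular, for T = {tx1, tx2, tx3} with tx1 ≃ (1,{k1}), tx2 ≃ (1,{k1}), tx3 ≃ (1,{k2}) and v given by the optimal scheduler on at least 2 threads (so v of every nonempty subset not containing both tx1 and tx2 equals 1, and v({tx1,tx2}) = v(T) = 2, v(∅) = 0), the Banzhaf gas values are 3/4, 3/4, 1/4 and sum to 7/4 ≠ 2 = v(T). -/
import Mathlib


/-- The Banzhaf GCM: `gas^B_T(tx) = (1/2^{n−1}) Σ_{S ⊆ T\{tx}} [v(S∪{tx}) − v(S)]`. -/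
noncomputable def banzhafGas {Tx : Type} [DecidableEq Tx]
    (v : Finset Tx → ℝ) (T : Finset Tx) (tx : Tx) : ℝ :=
  (1 / 2 ^ (T.card - 1)) * ∑ S ∈ (T.erase tx).powerset, (v (insert tx S) - v S)

/-- Execution times of the three transactions `tx1 ≃ (1,{k1})`,
`tx2 ≃ (1,{k1})`, `tx3 ≃ (1,{k2})`. -/
noncomputable def tTx5 : Fin 3 → ℝ := ![1, 1, 1]

/-- Storage key sets of the three transactions (keys `k1 = 0`, `k2 = 1`). -/
def keysTx5 : Fin 3 → Finset (Fin 2) := ![{0}, {0}, {1}]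

noncomputable def v5 (S : Finset (Fin 3)) : ℝ :=
  if (0 : Fin 3) ∈ S ∧ (1 : Fin 3) ∈ S then 2 else if S = ∅ then 0 else 1

lemma v5_mono {A B : Finset (Fin 3)} (h : A ⊆ B) : v5 A ≤ v5 B := by
  unfold v5
  by_cases hA : (0 : Fin 3) ∈ A ∧ (1 : Fin 3) ∈ A
  · rw [if_pos hA, if_pos ⟨h hA.1, h hA.2⟩]
  · rw [if_neg hA]
    by_cases hAe : A = ∅
    · rw [if_pos hAe]; split_ifs <;> norm_num
    · rw [if_neg hAe]
      have hBe : B ≠ ∅ := fun hB => hAe (Finset.subset_empty.mp (hB ▸ h))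
      rw [if_neg hBe]
      split_ifs <;> norm_num

lemma v5_eq_one {S : Finset (Fin 3)} (hne : S ≠ ∅)
    (h : ¬((0 : Fin 3) ∈ S ∧ (1 : Fin 3) ∈ S)) : v5 S = 1 := by
  unfold v5; rw [if_neg h, if_neg hne]

lemma one_le_v5 {S : Finset (Fin 3)} (hne : S ≠ ∅) : 1 ≤ v5 S := by
  unfold v5; rw [if_neg hne]; split_ifs <;> norm_num

lemma tTx5_eq_one (c : Fin 3) : tTx5 c = 1 := by fin_cases c <;> simp [tTx5]

lemma v5_val (S : Finset (Fin 3)) : v5 S =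
    if (0 : Fin 3) ∈ S ∧ (1 : Fin 3) ∈ S then 2 else if S = ∅ then 0 else 1 := rfl


lemma hb0 : banzhafGas v5 Finset.univ 0 = 3 / 4 := by
  rw [banzhafGas, show (Finset.univ.erase (0:Fin 3)).powerset =
    insert ∅ (insert {1} (insert {2} {({1,2} : Finset (Fin 3))})) from by decide]
  rw [Finset.sum_insert (by decide), Finset.sum_insert (by decide),
    Finset.sum_insert (by decide), Finset.sum_singleton]
  norm_num [v5, Finset.card_univ, Finset.insert_ne_empty, Fin.ext_iff]

lemma hb1 : banzhafGas v5 Finset.univ 1 = 3 / 4 := by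
  rw [banzhafGas, show (Finset.univ.erase (1:Fin 3)).powerset =
    insert ∅ (insert {0} (insert {2} {({0,2} : Finset (Fin 3))})) from by decide]
  rw [Finset.sum_insert (by decide), Finset.sum_insert (by decide),
    Finset.sum_insert (by decide), Finset.sum_singleton]
  norm_num [v5, Finset.card_univ, Finset.insert_ne_empty, Fin.ext_iff]

lemma hb2 : banzhafGas v5 Finset.univ 2 = 1 / 4 := by
  rw [banzhafGas, show (Finset.univ.erase (2:Fin 3)).powerset =
    insert ∅ (insert {0} (insert {1} {({0,1} : Finset (Fin 3))})) from by decide]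
  rw [Finset.sum_insert (by decide), Finset.sum_insert (by decide),
    Finset.sum_insert (by decide), Finset.sum_singleton]
  norm_num [v5, Finset.card_univ, Finset.insert_ne_empty, Fin.ext_iff]

/-- The Banzhaf GCM does not satisfy Efficiency: there exists a
makespan function `v` satisfying (S1)–(S4) (values given by the optimal
scheduler on at least 2 threads, so `v` of every nonempty subset not containing
both `tx1` and `tx2` equals 1, `v({tx1,tx2}) = v(T) = 2`, `v(∅) = 0`) for which
the Banzhaf gas values on `T = {tx1, tx2, tx3}` are `3/4, 3/4, 1/4`, summing to
`7/4 ≠ 2 = v(T)`. -/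
theorem banzhafGas_not_efficient :
    ∃ v : Finset (Fin 3) → ℝ,
      -- (S1) monotonicity in T
      (∀ A B : Finset (Fin 3), A ⊆ B → v A ≤ v B) ∧
      -- (S2) monotonicity under bundling
      (∀ (T : Finset (Fin 3)) (a b c : Fin 3), a ∉ T → b ∉ T → c ∉ T → a ≠ b →
        tTx5 c = tTx5 a + tTx5 b → keysTx5 c = keysTx5 a ∪ keysTx5 b →
        v (insert a (insert b T)) ≤ v (insert c T)) ∧
      -- (S3) monotonicity in t and K
      (∀ (T : Finset (Fin 3)) (a b : Fin 3), a ∉ T → b ∉ T →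
        tTx5 a ≤ tTx5 b → keysTx5 a ⊆ keysTx5 b →
        v (insert a T) ≤ v (insert b T)) ∧
      -- (S4) empty set
      v ∅ = 0 ∧
      -- v of every nonempty subset not containing both tx1 and tx2 equals 1
      (∀ S : Finset (Fin 3), S.Nonempty → ¬((0 : Fin 3) ∈ S ∧ (1 : Fin 3) ∈ S) →
        v S = 1) ∧
      v {0, 1} = 2 ∧ v Finset.univ = 2 ∧
      banzhafGas v Finset.univ 0 = 3 / 4 ∧
      banzhafGas v Finset.univ 1 = 3 / 4 ∧
      banzhafGas v Finset.univ 2 = 1 / 4 ∧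
      (∑ tx : Fin 3, banzhafGas v Finset.univ tx) = 7 / 4 ∧
      (∑ tx : Fin 3, banzhafGas v Finset.univ tx) ≠ v Finset.univ := by
  refine ⟨v5, fun A B h => v5_mono h, ?_, ?_, ?_, ?_, ?_, ?_, ?_, ?_, ?_, ?_, ?_⟩
  · intro T a b c _ _ _ _ ht _
    rw [tTx5_eq_one, tTx5_eq_one, tTx5_eq_one] at ht
    norm_num at ht
  · intro T a b ha hb _ hk
    fin_cases a <;> fin_cases b <;> simp_all [keysTx5] <;>
      first
      | exact le_refl _
      | { refine le_trans (le_of_eq (v5_eq_one (Finset.insert_ne_empty _ _) ?_))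
            (one_le_v5 (Finset.insert_ne_empty _ _))
          simp only [Finset.mem_insert]
          rintro ⟨h0, h1⟩
          rcases h0 with h0 | h0 <;> rcases h1 with h1 | h1 <;> simp_all }
  · simp [v5]
  · intro S hS h; exact v5_eq_one (Finset.nonempty_iff_ne_empty.mp hS) h
  · simp [v5]
  · simp [v5]
  · exact hb0
  · exact hb1
  · exact hb2
  · rw [Fin.sum_univ_three, hb0, hb1, hb2]; norm_num
  · rw [Fin.sum_univ_three, hb0, hb1, hb2, show v5 Finset.univ = 2 from by simp [v5]]
    norm_num
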